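/- Let k ≥ 1 and p ∈ [1,∞]. The Filippov set-valued map of the direction-preserving signum sgn_p : ℝ^k → ℝ^k satisfies: F[sgn_p](w) = { w/‖w‖_p } for every w ≠ 0, and F[sgn_p](0) = { v ∈ ℝ^k : ‖v‖_p ≤ 1 }, the closed unit ball of the ℓ_p norm. -/

import Mathlib

open MeasureTheory Set
open scoped ENNReal

noncomputable def eBall {ι : Type*} [Fintype ι] (x : ι → ℝ) (δ : ℝ) : Set (ι → ℝ) :=
  {y | Real.sqrt (∑ i, (y i - x i) ^ 2) < δ}

noncomputable def filippov {ι κ : Type*} [Fintype ι] [Fintype κ]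
    (h : (ι → ℝ) → (κ → ℝ)) (x : ι → ℝ) : Set (κ → ℝ) :=
  ⋂ (δ : ℝ) (_ : 0 < δ) (S : Set (ι → ℝ)) (_ : volume S = 0),
    closure (convexHull ℝ (h '' (eBall x δ \ S)))

noncomputable def lpNorm (p : ℝ≥0∞) {k : ℕ} (x : Fin k → ℝ) : ℝ :=
  if p = ∞ then ⨆ l, |x l| else (∑ l, |x l| ^ p.toReal) ^ (1 / p.toReal)

noncomputable def dpSign (p : ℝ≥0∞) {k : ℕ} (w : Fin k → ℝ) : Fin k → ℝ :=
  if w = 0 then 0 else (lpNorm p w)⁻¹ • w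

section Aux

variable {k : ℕ} {p : ℝ≥0∞}

lemma lpNorm_eq_norm (hp : 1 ≤ p) (x : Fin k → ℝ) :
    lpNorm p x = ‖(WithLp.equiv p (Fin k → ℝ)).symm x‖ := by
  haveI : Fact (1 ≤ p) := ⟨hp⟩
  rcases eq_or_ne p ∞ with h | h
  · subst h
    rw [PiLp.norm_eq_ciSup]
    simp [_root_.lpNorm, Real.norm_eq_abs]
  · have hp0 : p ≠ 0 := (lt_of_lt_of_le zero_lt_one hp).ne'
    have hpos : 0 < p.toReal := ENNReal.toReal_pos hp0 h
    rw [PiLp.norm_eq_sum hpos]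
    simp [_root_.lpNorm, h, Real.norm_eq_abs]

lemma lpNorm_nonneg (hp : 1 ≤ p) (x : Fin k → ℝ) : 0 ≤ lpNorm p x := by
  haveI : Fact (1 ≤ p) := ⟨hp⟩
  rw [lpNorm_eq_norm hp]; exact norm_nonneg _

lemma lpNorm_zero (hp : 1 ≤ p) : lpNorm p (0 : Fin k → ℝ) = 0 := by
  haveI : Fact (1 ≤ p) := ⟨hp⟩
  rw [lpNorm_eq_norm hp]
  exact norm_zero

lemma lpNorm_pos (hp : 1 ≤ p) {x : Fin k → ℝ} (hx : x ≠ 0) : 0 < lpNorm p x := by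
  haveI : Fact (1 ≤ p) := ⟨hp⟩
  rw [lpNorm_eq_norm hp, norm_pos_iff]
  intro h
  exact hx ((WithLp.equiv p (Fin k → ℝ)).symm.injective h)

lemma lpNorm_smul (hp : 1 ≤ p) (c : ℝ) (x : Fin k → ℝ) :
    lpNorm p (c • x) = |c| * lpNorm p x := by
  haveI : Fact (1 ≤ p) := ⟨hp⟩
  rw [lpNorm_eq_norm hp, lpNorm_eq_norm hp]
  have h : (WithLp.equiv p (Fin k → ℝ)).symm (c • x)
      = c • (WithLp.equiv p (Fin k → ℝ)).symm x := rfl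
  rw [h, norm_smul, Real.norm_eq_abs]

lemma continuous_lpNorm (hp : 1 ≤ p) : Continuous (lpNorm p : (Fin k → ℝ) → ℝ) := by
  haveI : Fact (1 ≤ p) := ⟨hp⟩
  have h : (lpNorm p : (Fin k → ℝ) → ℝ)
      = fun x => ‖(WithLp.equiv p (Fin k → ℝ)).symm x‖ := funext (lpNorm_eq_norm hp)
  rw [h]
  exact (PiLp.continuous_toLp _ _).norm

lemma lpNorm_dpSign (hp : 1 ≤ p) {w : Fin k → ℝ} (hw : w ≠ 0) :
    lpNorm p (dpSign p w) = 1 := by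
  have hpos := lpNorm_pos hp hw
  rw [dpSign, if_neg hw, lpNorm_smul hp, abs_inv, abs_of_pos hpos,
    inv_mul_cancel₀ hpos.ne']

lemma continuousAt_dpSign (hp : 1 ≤ p) {w : Fin k → ℝ} (hw : w ≠ 0) :
    ContinuousAt (dpSign p) w := by
  have hg : ContinuousAt (fun y : Fin k → ℝ => (lpNorm p y)⁻¹ • y) w :=
    (((continuous_lpNorm hp).continuousAt).inv₀ (lpNorm_pos hp hw).ne').smul continuousAt_id
  apply hg.congr
  filter_upwards [IsOpen.mem_nhds isOpen_compl_singleton hw] with y hy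
  have hy' : y ≠ 0 := hy
  rw [dpSign, if_neg hy']

lemma isOpen_eBall (x : Fin k → ℝ) (δ : ℝ) : IsOpen (eBall x δ) := by
  have h : eBall x δ
      = (fun y : Fin k → ℝ => Real.sqrt (∑ i, (y i - x i) ^ 2)) ⁻¹' Iio δ := rfl
  rw [h]
  exact isOpen_Iio.preimage (by fun_prop)

lemma mem_eBall_self (x : Fin k → ℝ) {δ : ℝ} (hδ : 0 < δ) : x ∈ eBall x δ := by
  simp [eBall, hδ]

lemma eBall_subset_ball (x : Fin k → ℝ) {δ : ℝ} (hδ : 0 < δ) :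
    eBall x δ ⊆ Metric.ball x δ := by
  intro y hy
  rw [Metric.mem_ball, dist_pi_lt_iff hδ]
  intro i
  rw [Real.dist_eq]
  calc |y i - x i| = Real.sqrt ((y i - x i) ^ 2) := (Real.sqrt_sq_eq_abs _).symm
    _ ≤ Real.sqrt (∑ j, (y j - x j) ^ 2) :=
        Real.sqrt_le_sqrt (Finset.single_le_sum (f := fun j => (y j - x j) ^ 2)
          (fun j _ => sq_nonneg _) (Finset.mem_univ i))
    _ < δ := hy

lemma exists_smul_mem_eBall (x : Fin k → ℝ) {δ : ℝ} (hδ : 0 < δ) :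
    ∃ t : ℝ, 0 < t ∧ t • x ∈ eBall 0 δ := by
  set r := Real.sqrt (∑ i, x i ^ 2) with hr
  have hr0 : 0 ≤ r := Real.sqrt_nonneg _
  have ht : 0 < δ / (r + 1) := by positivity
  refine ⟨δ / (r + 1), ht, ?_⟩
  simp only [eBall, mem_setOf_eq, Pi.smul_apply, smul_eq_mul, Pi.zero_apply, sub_zero]
  have hsum : ∑ i, (δ / (r + 1) * x i) ^ 2 = (δ / (r + 1)) ^ 2 * ∑ i, x i ^ 2 := by
    rw [Finset.mul_sum]
    exact Finset.sum_congr rfl fun i _ => by ring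
  rw [hsum, Real.sqrt_mul (sq_nonneg _), Real.sqrt_sq ht.le, ← hr,
    div_mul_eq_mul_div, div_lt_iff₀ (by positivity)]
  nlinarith

lemma exists_mem_diff {U S : Set (Fin k → ℝ)} (hU : IsOpen U) {x : Fin k → ℝ}
    (hx : x ∈ U) (hS : volume S = 0) : ∃ y ∈ U, y ∉ S := by
  by_contra h
  push_neg at h
  have h2 : volume U = 0 := le_antisymm (hS ▸ measure_mono h) zero_le
  exact (hU.measure_pos volume ⟨x, hx⟩).ne' h2

end Aux

/-- **Filippov set-valued map of the direction-preserving signum.**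
For `k ≥ 1` and `p ∈ [1, ∞]`, the Filippov set-valued map of `sgn_p` is the singleton
`{w / ‖w‖_p}` at every `w ≠ 0`, and at `0` it is the closed unit ball of the `ℓ_p` norm. -/
theorem filippov_dpSign {k : ℕ} (hk : 1 ≤ k) (p : ℝ≥0∞) (hp : 1 ≤ p) :
    (∀ w : Fin k → ℝ, w ≠ 0 →
      filippov (dpSign p) w = {(lpNorm p w)⁻¹ • w}) ∧
    filippov (dpSign p) (0 : Fin k → ℝ) = {v : Fin k → ℝ | lpNorm p v ≤ 1} := by
  constructor
  · intro w hw
    ext v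
    simp only [filippov, mem_iInter, mem_singleton_iff]
    constructor
    · intro hv
      apply eq_of_forall_dist_le
      intro ε hε
      obtain ⟨δ, hδ, hδ'⟩ := Metric.continuousAt_iff.mp (continuousAt_dpSign hp hw) ε hε
      have h1 := hv δ hδ ∅ (by simp)
      have himg : dpSign p '' (eBall w δ \ ∅) ⊆ Metric.closedBall (dpSign p w) ε := by
        rintro _ ⟨y, hy, rfl⟩
        have hd : dist y w < δ := by
          simpa [Metric.mem_ball] using eBall_subset_ball w hδ hy.1
        exact Metric.mem_closedBall.mpr (hδ' hd).le
      have hmem : v ∈ Metric.closedBall (dpSign p w) ε :=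
        closure_minimal (convexHull_min himg (convex_closedBall _ _)) Metric.isClosed_closedBall h1
      simpa [Metric.mem_closedBall, dpSign, if_neg hw] using hmem
    · rintro rfl δ hδ S hS
      have hpt : dpSign p w = (lpNorm p w)⁻¹ • w := by rw [dpSign, if_neg hw]
      rw [← hpt]
      apply closure_mono (subset_convexHull ℝ _)
      rw [Metric.mem_closure_iff]
      intro ε hε
      obtain ⟨δ₀, hδ₀, hδ₀'⟩ := Metric.continuousAt_iff.mp (continuousAt_dpSign hp hw) ε hε
      have hUopen : IsOpen (eBall w δ ∩ Metric.ball w δ₀) :=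
        (isOpen_eBall w δ).inter Metric.isOpen_ball
      obtain ⟨y, hyU, hyS⟩ := exists_mem_diff hUopen
        ⟨mem_eBall_self w hδ, Metric.mem_ball_self hδ₀⟩ hS
      exact ⟨dpSign p y, ⟨y, ⟨hyU.1, hyS⟩, rfl⟩, by
        rw [dist_comm]; exact hδ₀' hyU.2⟩
  · ext v
    simp only [filippov, mem_iInter, mem_setOf_eq]
    constructor
    · intro hv
      have h1 := hv 1 one_pos ∅ (by simp)
      have hconv : Convex ℝ {v : Fin k → ℝ | lpNorm p v ≤ 1} := by
        intro x hx y hy a b ha hb hab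
        simp only [mem_setOf_eq] at hx hy ⊢
        rw [lpNorm_eq_norm hp] at hx hy ⊢
        have heq : (WithLp.equiv p (Fin k → ℝ)).symm (a • x + b • y)
            = a • (WithLp.equiv p (Fin k → ℝ)).symm x
              + b • (WithLp.equiv p (Fin k → ℝ)).symm y := rfl
        haveI : Fact (1 ≤ p) := ⟨hp⟩
        rw [heq]
        calc ‖a • (WithLp.equiv p (Fin k → ℝ)).symm x
              + b • (WithLp.equiv p (Fin k → ℝ)).symm y‖
            ≤ ‖a • (WithLp.equiv p (Fin k → ℝ)).symm x‖
              + ‖b • (WithLp.equiv p (Fin k → ℝ)).symm y‖ := norm_add_le _ _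
          _ = a * ‖(WithLp.equiv p (Fin k → ℝ)).symm x‖
              + b * ‖(WithLp.equiv p (Fin k → ℝ)).symm y‖ := by
                rw [norm_smul, norm_smul, Real.norm_eq_abs, Real.norm_eq_abs,
                  abs_of_nonneg ha, abs_of_nonneg hb]
          _ ≤ a * 1 + b * 1 := by gcongr
          _ = 1 := by rw [mul_one, mul_one, hab]
      have hclosed : IsClosed {v : Fin k → ℝ | lpNorm p v ≤ 1} :=
        isClosed_le (continuous_lpNorm hp) continuous_const
      have himg : dpSign p '' (eBall 0 1 \ ∅) ⊆ {v : Fin k → ℝ | lpNorm p v ≤ 1} := by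
        rintro _ ⟨y, -, rfl⟩
        by_cases hy : y = 0
        · subst hy
          rw [dpSign, if_pos rfl]
          simp only [mem_setOf_eq]
          rw [lpNorm_zero hp]
          exact zero_le_one
        · simp only [mem_setOf_eq]
          rw [lpNorm_dpSign hp hy]
      exact closure_minimal (convexHull_min himg hconv) hclosed h1
    · intro hv δ hδ S hS
      haveI : Nonempty (Fin k) := ⟨⟨0, hk⟩⟩
      have hone : (fun _ : Fin k => (1 : ℝ)) ≠ 0 := by
        intro h
        have := congrFun h ⟨0, hk⟩
        simp at this
      obtain ⟨u, t, hu1, ht0, ht1, hv_eq⟩ :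
          ∃ (u : Fin k → ℝ) (t : ℝ), lpNorm p u = 1 ∧ 0 ≤ t ∧ t ≤ 1 ∧ v = t • u := by
        by_cases hv0 : v = 0
        · exact ⟨dpSign p (fun _ => 1), 0, lpNorm_dpSign hp hone, le_refl 0, zero_le_one,
            by simp [hv0]⟩
        · refine ⟨dpSign p v, lpNorm p v, lpNorm_dpSign hp hv0,
            (lpNorm_pos hp hv0).le, hv, ?_⟩
          rw [dpSign, if_neg hv0, smul_smul, mul_inv_cancel₀ (lpNorm_pos hp hv0).ne', one_smul]
      have claimA : ∀ x : Fin k → ℝ, lpNorm p x = 1 →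
          x ∈ closure (dpSign p '' (eBall 0 δ \ S)) := by
        intro x hx
        have hx0 : x ≠ 0 := by
          intro h
          rw [h, lpNorm_zero hp] at hx
          norm_num at hx
        rw [Metric.mem_closure_iff]
        intro ε hε
        obtain ⟨t₀, ht₀, htmem⟩ := exists_smul_mem_eBall x hδ
        have hw0 : t₀ • x ≠ 0 := smul_ne_zero ht₀.ne' hx0
        have hgw : dpSign p (t₀ • x) = x := by
          rw [dpSign, if_neg hw0, lpNorm_smul hp, abs_of_pos ht₀, hx, mul_one, smul_smul,
            inv_mul_cancel₀ ht₀.ne', one_smul]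
        obtain ⟨δ₀, hδ₀, hδ₀'⟩ := Metric.continuousAt_iff.mp (continuousAt_dpSign hp hw0) ε hε
        have hUopen : IsOpen (eBall 0 δ ∩ Metric.ball (t₀ • x) δ₀) :=
          (isOpen_eBall _ _).inter Metric.isOpen_ball
        obtain ⟨y, hyU, hyS⟩ := exists_mem_diff hUopen ⟨htmem, Metric.mem_ball_self hδ₀⟩ hS
        refine ⟨dpSign p y, ⟨y, ⟨hyU.1, hyS⟩, rfl⟩, ?_⟩
        rw [dist_comm]
        simpa [hgw] using hδ₀' hyU.2
      have hconv2 : Convex ℝ (closure (convexHull ℝ (dpSign p '' (eBall 0 δ \ S)))) :=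
        (convex_convexHull ℝ _).closure
      have humem : u ∈ closure (convexHull ℝ (dpSign p '' (eBall 0 δ \ S))) :=
        closure_mono (subset_convexHull ℝ _) (claimA u hu1)
      have hnegu : (-u) ∈ closure (convexHull ℝ (dpSign p '' (eBall 0 δ \ S))) := by
        refine closure_mono (subset_convexHull ℝ _) (claimA (-u) ?_)
        rw [show (-u) = (-1 : ℝ) • u from by simp, lpNorm_smul hp]
        simp [hu1]
      have hvrep : v = ((1 + t) / 2) • u + ((1 - t) / 2) • (-u) := by
        rw [hv_eq]
        module
      rw [hvrep]
      exact hconv2 humem hnegu (by linarith) (by linarith) (by ring)
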